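/- arXiv:1006.5025 — 4 statements merged into one kernel-verified Lean document; each statement's English description precedes it below -/
import Mathlib

section
/- Fix real numbers ω, ε, let ψ, Γ : ℝ → ℝ with ψ continuous and Γ continuous, set β(t) := Real.exp(−∫ s in (0)..t, Γ(s)) (so that β'(t)/β(t) = −Γ(t) and β(t) > 0), let α : ℝ → ℝ be differentiable, and define γ(t) := β(t)⁻¹·(−ω^2 − ε·ψ(t) − α'(t) − α(t)^2 + β'(t)·α(t)/β(t)). If y, z : ℝ → ℝ are differentiable and satisfy the traceless system y'(t) = α(t)·y(t) + β(t)·z(t), z'(t) = γ(t)·y(t) − α(t)·z(t) for all t, then y is twice differentiable and satisfies the damped Mathieu equation y''(t) + Γ(t)·y'(t) + (ω^2 + ε·ψ(t))·y(t) = 0 for all t. -/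
/-- Realizing the damped Mathieu equation by a traceless linear system: with
`β(t) = exp (-∫₀ᵗ Γ)` and
`γ(t) = β(t)⁻¹·(-ω² - ε·ψ(t) - α̇(t) - α(t)² + β̇(t)·α(t)/β(t))`, any solution
`(y, z)` of the traceless system `ẏ = αy + βz`, `ż = γy - αz` has `y` twice
differentiable and solving the damped Mathieu equation
`ÿ + Γ(t)·ẏ + (ω² + ε·ψ(t))·y = 0`. -/
theorem damped_mathieu_from_traceless_system
    (ω ε : ℝ) (ψ Γ : ℝ → ℝ) (hψ : Continuous ψ) (hΓ : Continuous Γ)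
    (β : ℝ → ℝ)
    (hβ : ∀ t : ℝ, β t = Real.exp (-∫ s in (0 : ℝ)..t, Γ s))
    (α dα : ℝ → ℝ)
    (hα : ∀ t : ℝ, HasDerivAt α (dα t) t)
    (γ : ℝ → ℝ)
    (hγ : ∀ t : ℝ, γ t =
      (β t)⁻¹ * (-ω ^ 2 - ε * ψ t - dα t - α t ^ 2 + deriv β t * α t / β t))
    (y z : ℝ → ℝ)
    (hy : ∀ t : ℝ, HasDerivAt y (α t * y t + β t * z t) t)
    (hz : ∀ t : ℝ, HasDerivAt z (γ t * y t - α t * z t) t) :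
    ∃ ddy : ℝ → ℝ, (∀ t : ℝ, HasDerivAt (deriv y) (ddy t) t) ∧
      ∀ t : ℝ, ddy t + Γ t * deriv y t + (ω ^ 2 + ε * ψ t) * y t = 0 := by
  -- β is positive and has derivative -Γ t * β t
  have hβpos : ∀ t, 0 < β t := fun t => (hβ t) ▸ Real.exp_pos _
  have hβd : ∀ t, HasDerivAt β (-Γ t * β t) t := by
    intro t
    have h1 : HasDerivAt (fun u => ∫ s in (0:ℝ)..u, Γ s) (Γ t) t :=
      (hΓ.integral_hasStrictDerivAt 0 t).hasDerivAt
    have h2 : HasDerivAt (fun u => Real.exp (-∫ s in (0:ℝ)..u, Γ s))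
        (Real.exp (-∫ s in (0:ℝ)..t, Γ s) * (-Γ t)) t :=
      (Real.hasDerivAt_exp _).comp t h1.neg
    have hfun : β = fun u => Real.exp (-∫ s in (0:ℝ)..u, Γ s) := funext hβ
    rw [hfun]
    simpa [mul_comm] using h2
  have hβderiv : ∀ t, deriv β t = -Γ t * β t := fun t => (hβd t).deriv
  have hdy : ∀ t, deriv y t = α t * y t + β t * z t := fun t => (hy t).deriv
  refine ⟨fun t => -(Γ t * deriv y t) - (ω ^ 2 + ε * ψ t) * y t, fun t => ?_, fun t => by ring⟩
  have hdyfun : deriv y = fun t => α t * y t + β t * z t := funext hdy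
  rw [hdyfun]
  have H : HasDerivAt (fun t => α t * y t + β t * z t)
      (dα t * y t + α t * (α t * y t + β t * z t) +
        ((-Γ t * β t) * z t + β t * (γ t * y t - α t * z t))) t :=
    ((hα t).mul (hy t)).add ((hβd t).mul (hz t))
  convert H using 1
  have hβne : β t ≠ 0 := (hβpos t).ne'
  simp only [hγ, hβderiv]
  field_simp
  ring
end

section
/- Let A : ℝ → Matrix (Fin 2) (Fin 2) ℝ be continuous and Φ : ℝ → Matrix (Fin 2) (Fin 2) ℝ be differentiable with Φ'(t) = A(t) * Φ(t) for all t and Φ(t) invertible for all t. Let g : ℝ → ℝ be differentiable, η ∈ ℝ, and define H(t) := (η·g'(t)) • (Φ(t) * J * Φ(t)⁻¹), where J := ![![0,−1],![1,0]]. Then the curve v(t) := Φ(t) * R_{η·g(t)} satisfies the perturbed linear variational equation v'(t) = (A(t) + H(t)) * v(t) for all t; moreover trace (H(t)) = 0 for all t, H(t) = 0 whenever g'(t) = 0, and if g(1) = 1 then v(1) = Φ(1) * R_η. -/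
attribute [local instance] Matrix.normedAddCommGroup Matrix.normedSpace

/-- The rotation matrix of angle `θ`. -/
noncomputable def Rot (θ : ℝ) : Matrix (Fin 2) (Fin 2) ℝ :=
  !![Real.cos θ, -Real.sin θ; Real.sin θ, Real.cos θ]

/-- The infinitesimal generator of rotations. -/
def Jmat : Matrix (Fin 2) (Fin 2) ℝ := !![0, -1; 1, 0]

lemma Rot_eq (θ : ℝ) :
    Rot θ = Real.cos θ • (1 : Matrix (Fin 2) (Fin 2) ℝ) + Real.sin θ • Jmat := by
  ext i j
  fin_cases i <;> fin_cases j <;>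
    simp [Rot, Jmat, Matrix.one_apply]

lemma Jmat_mul_Rot (θ : ℝ) :
    Jmat * Rot θ = (-Real.sin θ) • (1 : Matrix (Fin 2) (Fin 2) ℝ) + Real.cos θ • Jmat := by
  ext i j
  fin_cases i <;> fin_cases j <;>
    simp [Rot, Jmat, Matrix.mul_apply, Fin.sum_univ_two, Matrix.one_apply]

noncomputable def mulCLM :
    Matrix (Fin 2) (Fin 2) ℝ →L[ℝ] Matrix (Fin 2) (Fin 2) ℝ →L[ℝ] Matrix (Fin 2) (Fin 2) ℝ :=
  LinearMap.toContinuousLinearMap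
    ((LinearMap.toContinuousLinearMap.toLinearMap).comp
      (LinearMap.mul ℝ (Matrix (Fin 2) (Fin 2) ℝ)))

@[simp] lemma mulCLM_apply (a b : Matrix (Fin 2) (Fin 2) ℝ) : mulCLM a b = a * b := rfl

/-- The core construction of the rotation-perturbation lemma: if `Φ` solves
`Φ' = A·Φ` with `Φ t` invertible, `g` is differentiable and
`H(t) = (η·ġ(t)) • (Φ(t) * J * Φ(t)⁻¹)`, then `v(t) = Φ(t) * R_{η·g(t)}` solves the
perturbed equation `v' = (A + H)·v`; moreover `H` is traceless, `H(t) = 0` wherever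
`ġ(t) = 0`, and if `g 1 = 1` then `v 1 = Φ(1) * R_η`. -/
theorem rotation_perturbation
    (A Φ : ℝ → Matrix (Fin 2) (Fin 2) ℝ)
    (hA : Continuous A)
    (hΦ : ∀ t : ℝ, HasDerivAt Φ (A t * Φ t) t)
    (hΦinv : ∀ t : ℝ, IsUnit (Φ t))
    (g dg : ℝ → ℝ)
    (hg : ∀ t : ℝ, HasDerivAt g (dg t) t)
    (η : ℝ)
    (H : ℝ → Matrix (Fin 2) (Fin 2) ℝ)
    (hH : ∀ t : ℝ, H t = (η * dg t) • (Φ t * Jmat * (Φ t)⁻¹)) :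
    (∀ t : ℝ, HasDerivAt (fun s : ℝ => Φ s * Rot (η * g s))
        ((A t + H t) * (Φ t * Rot (η * g t))) t) ∧
      (∀ t : ℝ, (H t).trace = 0) ∧
      (∀ t : ℝ, dg t = 0 → H t = 0) ∧
      (g 1 = 1 → Φ 1 * Rot (η * g 1) = Φ 1 * Rot η) := by
  refine ⟨?_, ?_, ?_, ?_⟩
  · intro t
    -- derivative of the rotation part
    have hθ : HasDerivAt (fun s => η * g s) (η * dg t) t := (hg t).const_mul η
    have hR : HasDerivAt (fun s => Rot (η * g s))
        ((η * dg t) • (Jmat * Rot (η * g t))) t := by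
      have hc : HasDerivAt (fun s => Real.cos (η * g s))
          (-Real.sin (η * g t) * (η * dg t)) t := hθ.cos
      have hs : HasDerivAt (fun s => Real.sin (η * g s))
          (Real.cos (η * g t) * (η * dg t)) t := hθ.sin
      have h := (hc.smul_const (1 : Matrix (Fin 2) (Fin 2) ℝ)).add (hs.smul_const Jmat)
      have hfun : (fun s => Real.cos (η * g s) • (1 : Matrix (Fin 2) (Fin 2) ℝ)
          + Real.sin (η * g s) • Jmat) = fun s => Rot (η * g s) := by
        funext s; rw [Rot_eq]
      change HasDerivAt (fun s => Real.cos (η * g s) • (1 : Matrix (Fin 2) (Fin 2) ℝ)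
          + Real.sin (η * g s) • Jmat) _ t at h
      rw [hfun] at h
      convert h using 1
      rw [Jmat_mul_Rot, smul_add, smul_smul, smul_smul]
      ring_nf
    letI : NormedAddCommGroup (Matrix (Fin 2) (Fin 2) ℝ →L[ℝ] Matrix (Fin 2) (Fin 2) ℝ) :=
      ContinuousLinearMap.toNormedAddCommGroup
    letI : NormedSpace ℝ (Matrix (Fin 2) (Fin 2) ℝ →L[ℝ] Matrix (Fin 2) (Fin 2) ℝ) :=
      ContinuousLinearMap.toNormedSpace
    have hΦ' : HasDerivAt (fun s => mulCLM (Φ s)) (mulCLM (A t * Φ t)) t :=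
      mulCLM.hasFDerivAt.comp_hasDerivAt t (hΦ t)
    have hv := hΦ'.clm_apply hR
    change HasDerivAt (fun y => Φ y * Rot (η * g y))
      (A t * Φ t * Rot (η * g t) + Φ t * ((η * dg t) • (Jmat * Rot (η * g t)))) t at hv
    convert hv using 1
    have hinv : (Φ t)⁻¹ * Φ t = 1 :=
      Matrix.nonsing_inv_mul (Φ t) ((Matrix.isUnit_iff_isUnit_det (Φ t)).mp (hΦinv t))
    rw [hH, add_mul, Matrix.smul_mul, mul_smul_comm]
    congr 1
    · rw [Matrix.mul_assoc]
    · congr 1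
      calc Φ t * Jmat * (Φ t)⁻¹ * (Φ t * Rot (η * g t))
          = Φ t * Jmat * ((Φ t)⁻¹ * Φ t) * Rot (η * g t) := by
            simp [Matrix.mul_assoc]
        _ = Φ t * (Jmat * Rot (η * g t)) := by rw [hinv]; simp [Matrix.mul_assoc]
  · intro t
    rw [hH, Matrix.trace_smul, Matrix.mul_assoc, Matrix.trace_mul_comm]
    have hinv : (Φ t)⁻¹ * Φ t = 1 :=
      Matrix.nonsing_inv_mul (Φ t) ((Matrix.isUnit_iff_isUnit_det (Φ t)).mp (hΦinv t))
    rw [Matrix.mul_assoc, hinv, Matrix.mul_one]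
    have : Jmat.trace = 0 := by simp [Jmat, Matrix.trace_fin_two]
    rw [this, smul_zero]
  · intro t ht
    rw [hH, ht, mul_zero, zero_smul]
  · intro h1
    rw [h1, mul_one]
end

section
/- Fix real numbers ω, ε, η with ε ≠ 0, let ψ, F, G, H : ℝ → ℝ be differentiable, let g : ℝ → ℝ be twice differentiable, and suppose 1 − η·g'(t)·G(t) ≠ 0 for all t. Define the traceless matrix B(t) := ![![η·g'(t)·F(t), 1 − η·g'(t)·G(t)], ![−ω^2 − ε·ψ(t) + η·g'(t)·H(t), −η·g'(t)·F(t)]], and define Γ_η(t) := (η·g''(t)·G(t) + η·g'(t)·G'(t)) / (1 − η·g'(t)·G(t)) and Θ_η(t) := −η·g''(t)·F(t) − (g''(t)·G(t) + g'(t)·G'(t))·η^2·g'(t)·F(t)/(1 − η·g'(t)·G(t)) + η^2·g'(t)^2·(G(t)·H(t) − F(t)^2) − η·g'(t)·(F'(t) + H(t) + ω^2·G(t) + G(t)·ε·ψ(t)). If y, z : ℝ → ℝ are differentiable and satisfy y'(t) = (B(t) 0 0)·y(t) + (B(t) 0 1)·z(t) and z'(t) = (B(t) 1 0)·y(t) +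 (B(t) 1 1)·z(t) for all t, then y is twice differentiable and satisfies the damped Mathieu equation y''(t) + Γ_η(t)·y'(t) + (ω^2 + ε·Ψ_η(t))·y(t) = 0 for all t, where Ψ_η(t) := ψ(t) + ε⁻¹·Θ_η(t). -/
/-- Solutions of the perturbed traceless system
`B(t) = ![![η·ġ·F, 1 - η·ġ·G], ![-ω² - ε·ψ + η·ġ·H, -η·ġ·F]]` satisfy a damped
Mathieu equation `ÿ + Γ_η(t)·ẏ + (ω² + ε·Ψ_η(t))·y = 0` with the displayed
coefficients `Γ_η` and `Ψ_η = ψ + ε⁻¹·Θ_η`. -/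
theorem perturbed_system_damped_mathieu
    (ω ε η : ℝ) (hε : ε ≠ 0)
    (ψ F G H : ℝ → ℝ) (dF dG dH : ℝ → ℝ)
    (hψ : Differentiable ℝ ψ)
    (hF : ∀ t : ℝ, HasDerivAt F (dF t) t)
    (hG : ∀ t : ℝ, HasDerivAt G (dG t) t)
    (hH : ∀ t : ℝ, HasDerivAt H (dH t) t)
    (g dg ddg : ℝ → ℝ)
    (hg : ∀ t : ℝ, HasDerivAt g (dg t) t)
    (hdg : ∀ t : ℝ, HasDerivAt dg (ddg t) t)
    (hne : ∀ t : ℝ, 1 - η * dg t * G t ≠ 0)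
    (Γη Θη Ψη : ℝ → ℝ)
    (hΓη : ∀ t : ℝ, Γη t =
      (η * ddg t * G t + η * dg t * dG t) / (1 - η * dg t * G t))
    (hΘη : ∀ t : ℝ, Θη t =
      -(η * ddg t * F t)
        - (ddg t * G t + dg t * dG t) * η ^ 2 * dg t * F t / (1 - η * dg t * G t)
        + η ^ 2 * dg t ^ 2 * (G t * H t - F t ^ 2)
        - η * dg t * (dF t + H t + ω ^ 2 * G t + G t * ε * ψ t))
    (hΨη : ∀ t : ℝ, Ψη t = ψ t + ε⁻¹ * Θη t)
    (y z : ℝ → ℝ)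
    (hy : ∀ t : ℝ, HasDerivAt y
      ((η * dg t * F t) * y t + (1 - η * dg t * G t) * z t) t)
    (hz : ∀ t : ℝ, HasDerivAt z
      ((-ω ^ 2 - ε * ψ t + η * dg t * H t) * y t + (-(η * dg t * F t)) * z t) t) :
    ∃ ddy : ℝ → ℝ, (∀ t : ℝ, HasDerivAt (deriv y) (ddy t) t) ∧
      ∀ t : ℝ, ddy t + Γη t * deriv y t + (ω ^ 2 + ε * Ψη t) * y t = 0 := by
  have hderiv : deriv y = fun t => (η * dg t * F t) * y t + (1 - η * dg t * G t) * z t :=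
    funext fun t => (hy t).deriv
  refine ⟨fun t =>
      (η * (ddg t * F t + dg t * dF t)) * y t
        + (η * dg t * F t) * ((η * dg t * F t) * y t + (1 - η * dg t * G t) * z t)
        + (-(η * (ddg t * G t + dg t * dG t))) * z t
        + (1 - η * dg t * G t) *
            ((-ω ^ 2 - ε * ψ t + η * dg t * H t) * y t + (-(η * dg t * F t)) * z t),
    fun t => ?_, fun t => ?_⟩
  · rw [hderiv]
    have h1 : HasDerivAt (fun t => η * dg t * F t)
        (η * (ddg t * F t + dg t * dF t)) t := by
      have : HasDerivAt (fun t => η * dg t * F t) _ t := (((hdg t).const_mul η).mul (hF t))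
      convert this using 1; ring
    have h2 : HasDerivAt (fun t => 1 - η * dg t * G t)
        (-(η * (ddg t * G t + dg t * dG t))) t := by
      have : HasDerivAt (fun t => 1 - η * dg t * G t) _ t :=
        (hasDerivAt_const t (1:ℝ)).sub (((hdg t).const_mul η).mul (hG t))
      convert this using 1; ring
    have : HasDerivAt (fun t => η * dg t * F t * y t + (1 - η * dg t * G t) * z t) _ t :=
      (h1.mul (hy t)).add (h2.mul (hz t))
    convert this using 1
    ring
  · rw [hderiv, hΓη, hΨη, hΘη]
    simp only
    have hb := hne t
    field_simp [hb]
    ring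
end

section
/- Let K ≥ 0 and ε ≥ 0, let A, B : ℝ → Matrix (Fin 2) (Fin 2) ℝ be continuous with ‖A(t)‖ ≤ K and ‖B(t)‖ ≤ K for all t, and ‖A(t) − B(t)‖ ≤ ε for all t. Let Φ_A, Φ_B : ℝ → Matrix (Fin 2) (Fin 2) ℝ be differentiable with Φ_A'(t) = A(t)*Φ_A(t), Φ_B'(t) = B(t)*Φ_B(t) and Φ_A(0) = Φ_B(0) = 1. Then for every t ≥ 0, ‖Φ_A(t) − Φ_B(t)‖ ≤ ε · t · Real.exp(2·K·t). (Gronwall-type estimate: the fundamental solution of a perturbation of a bounded linear differential system stays exponentially close to the original fundamental solution.) -/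
attribute [local instance] Matrix.linftyOpNormedAddCommGroup Matrix.linftyOpNormedRing
  Matrix.linftyOpNormedSpace

lemma exp_sub_one_le_mul_exp {u : ℝ} (_hu : 0 ≤ u) :
    Real.exp u - 1 ≤ u * Real.exp u := by
  have h := Real.add_one_le_exp (-u)
  have h2 : Real.exp (-u) * Real.exp u = 1 := by
    rw [← Real.exp_add]; simp
  nlinarith [Real.exp_pos u]

/-- Gronwall-type estimate: the fundamental solutions of two bounded linear
differential systems that are `ε`-close stay `ε·t·exp(2Kt)`-close. -/
theorem gronwall_perturbation
    (K ε : ℝ) (hK : 0 ≤ K) (hε : 0 ≤ ε)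
    (A B : ℝ → Matrix (Fin 2) (Fin 2) ℝ)
    (hA : Continuous A) (hB : Continuous B)
    (hAbd : ∀ t : ℝ, ‖A t‖ ≤ K) (hBbd : ∀ t : ℝ, ‖B t‖ ≤ K)
    (hAB : ∀ t : ℝ, ‖A t - B t‖ ≤ ε)
    (ΦA ΦB : ℝ → Matrix (Fin 2) (Fin 2) ℝ)
    (hΦA : ∀ t : ℝ, HasDerivAt ΦA (A t * ΦA t) t)
    (hΦB : ∀ t : ℝ, HasDerivAt ΦB (B t * ΦB t) t)
    (hΦA0 : ΦA 0 = 1) (hΦB0 : ΦB 0 = 1) :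
    ∀ t : ℝ, 0 ≤ t → ‖ΦA t - ΦB t‖ ≤ ε * t * Real.exp (2 * K * t) := by
  intro T hT
  set v : ℝ → Matrix (Fin 2) (Fin 2) ℝ := fun t => ΦA t - ΦB t with hvdef
  have hv' : ∀ t, HasDerivAt v (A t * v t + (A t - B t) * ΦB t) t := by
    intro t
    have h : HasDerivAt v (A t * ΦA t - B t * ΦB t) t := (hΦA t).sub (hΦB t)
    convert h using 1
    show A t * (ΦA t - ΦB t) + (A t - B t) * ΦB t = A t * ΦA t - B t * ΦB t
    noncomm_ring
  -- bound on ΦB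
  have hΦBbd : ∀ s ∈ Set.Icc (0:ℝ) T, ‖ΦB s‖ ≤ Real.exp (K * s) := by
    intro s hs
    have h := norm_le_gronwallBound_of_norm_deriv_right_le
      (f := ΦB) (f' := fun t => B t * ΦB t) (a := 0) (b := T) (δ := 1) (K := K) (ε := 0)
      (fun x _ => (hΦB x).continuousAt.continuousWithinAt)
      (fun x _ => (hΦB x).hasDerivWithinAt)
      (by simp [hΦB0])
      (fun x _ => by
        have h1 := norm_mul_le (B x) (ΦB x)
        have h2 := hBbd x
        have h3 : (0:ℝ) ≤ ‖ΦB x‖ := norm_nonneg _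
        nlinarith)
      s hs
    simpa [gronwallBound_ε0] using h
  have key : ‖v T‖ ≤ gronwallBound 0 K (ε * Real.exp (K * T)) (T - 0) := by
    apply norm_le_gronwallBound_of_norm_deriv_right_le
      (fun x _ => (hv' x).continuousAt.continuousWithinAt)
      (fun x _ => (hv' x).hasDerivWithinAt)
      (by simp [hvdef, hΦA0, hΦB0])
      (fun x hx => ?_) T (Set.right_mem_Icc.2 hT)
    have hx' : x ∈ Set.Icc (0:ℝ) T := ⟨hx.1, le_of_lt hx.2⟩
    calc ‖A x * v x + (A x - B x) * ΦB x‖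
        ≤ ‖A x * v x‖ + ‖(A x - B x) * ΦB x‖ := norm_add_le _ _
      _ ≤ ‖A x‖ * ‖v x‖ + ‖A x - B x‖ * ‖ΦB x‖ :=
          add_le_add (norm_mul_le _ _) (norm_mul_le _ _)
      _ ≤ K * ‖v x‖ + ε * Real.exp (K * T) := by
          have h1 := hAbd x
          have h2 := hAB x
          have h3 := hΦBbd x hx'
          have h4 : Real.exp (K * x) ≤ Real.exp (K * T) :=
            Real.exp_le_exp.2 (mul_le_mul_of_nonneg_left hx'.2 hK)
          have h5 := Real.exp_pos (K * x)
          nlinarith [norm_nonneg (v x), norm_nonneg (ΦB x), norm_nonneg (A x - B x)]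
  have hE : (0:ℝ) < Real.exp (K * T) := Real.exp_pos _
  have hfin : gronwallBound 0 K (ε * Real.exp (K * T)) (T - 0)
      ≤ ε * T * Real.exp (2 * K * T) := by
    rw [sub_zero]
    have h2exp : Real.exp (2 * K * T) = Real.exp (K * T) * Real.exp (K * T) := by
      rw [← Real.exp_add]; ring_nf
    rcases eq_or_lt_of_le hK with hK0 | hKpos
    · rw [← hK0, gronwallBound_K0]
      simp only [← hK0, zero_mul, Real.exp_zero, mul_one, zero_add, mul_zero] at *
      linarith
    · rw [gronwallBound_of_K_ne_0 (ne_of_gt hKpos)]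
      have hE1 : Real.exp (K * T) - 1 ≤ K * T * Real.exp (K * T) :=
        exp_sub_one_le_mul_exp (mul_nonneg hK hT)
      simp only [h2exp, zero_mul, zero_add]
      rw [div_mul_eq_mul_div, div_le_iff₀ hKpos]
      nlinarith [mul_le_mul_of_nonneg_left hE1 (mul_nonneg hε (le_of_lt hE))]
  calc ‖ΦA T - ΦB T‖ = ‖v T‖ := rfl
    _ ≤ _ := key
    _ ≤ _ := hfin
end
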